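/- Let (h_n) be a sequence of continuous functions from an interval I containing 0 to ℝ with h_n(0) = 0, and suppose x_n → x, y_n → y, and φ_{h_n(t)}(y_n) ∈ H(φ_t(x_n)) for every n and every t ∈ I, where H is a continuous field of transversal sections of time τ for the regular flow φ on a compact metric space. Then (h_n) has a subsequence converging uniformly on compact subsets of I to a continuous function h : I → ℝ satisfying φ_{h(t)}(y) ∈ H(φ_t(x)) for every t ∈ I. -/

import Mathlib

open Metric Set Filter Topology

variable {X : Type*}

/-- A reparametrization: an increasing homeomorphism of `ℝ` fixing `0`. -/
def IsRep (h : ℝ → ℝ) : Prop :=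
  StrictMono h ∧ Function.Surjective h ∧ h 0 = 0

/-- A map that agrees on `[0,∞)` with some reparametrization. -/
def IsRepPlus (α : ℝ → ℝ) : Prop :=
  ∃ h : ℝ → ℝ, IsRep h ∧ ∀ t ≥ (0:ℝ), α t = h t

/-- A map that agrees on `(-∞,0]` with some reparametrization. -/
def IsRepMinus (α : ℝ → ℝ) : Prop :=
  ∃ h : ℝ → ℝ, IsRep h ∧ ∀ t ≤ (0:ℝ), α t = h t

/-- `φ_{[a,b]}(S)`, the saturation of a set `S` by flow times in `[a,b]`. -/
def flowSeg [MetricSpace X] (φ : Flow ℝ X) (a b : ℝ) (S : Set X) : Set X :=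
  {z | ∃ t ∈ Set.Icc a b, ∃ y ∈ S, z = φ t y}

/-- The flow has no fixed points (is regular). -/
def NoFixedPoints [MetricSpace X] (φ : Flow ℝ X) : Prop :=
  ∀ x : X, ∃ t : ℝ, φ t x ≠ x

/-- A field of transversal sections of time `τ` for the flow `φ`. -/
structure SecField [MetricSpace X] (φ : Flow ℝ X) (τ : ℝ) where
  H : X → Set X
  τ' : ℝ
  r : ℝ
  τ'_pos : 0 < τ'
  r_pos : 0 < r
  compactH : ∀ x : X, IsCompact (H x)
  mem_self : ∀ x : X, x ∈ H x
  cover : ∀ x : X, Metric.closedBall x r ⊆ flowSeg φ (-τ') τ' (H x)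
  unique_hit : ∀ x : X, ∀ y ∈ H x, H x ∩ flowSeg φ (-τ') τ' {y} = {y}
  inj : ∀ x : X, Set.InjOn (fun p : ℝ × X => φ p.1 p.2) (Set.Icc (-τ) τ ×ˢ H x)

/-- Continuity of the field of sections with respect to the Hausdorff distance. -/
def SecFieldContinuous [MetricSpace X] {τ : ℝ} (φ : Flow ℝ X) (F : SecField φ τ) : Prop :=
  ∀ x : X, Filter.Tendsto (fun y => Metric.hausdorffDist (F.H y) (F.H x)) (nhds x) (nhds 0)

/-- The sectionally geometric ε-stable set `T^s_ε(x)`. -/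
def Tstab [MetricSpace X] {τ : ℝ} (φ : Flow ℝ X) (F : SecField φ τ) (ε : ℝ) (x : X) : Set X :=
  {y | ∃ α : ℝ → ℝ, IsRepPlus α ∧ ∀ t ≥ (0:ℝ),
    φ (α t) y ∈ F.H (φ t x) ∩ Metric.closedBall (φ t x) ε}

/-- The sectionally geometric ε-unstable set `T^u_ε(x)`. -/
def Tunstab [MetricSpace X] {τ : ℝ} (φ : Flow ℝ X) (F : SecField φ τ) (ε : ℝ) (x : X) : Set X :=
  {y | ∃ α : ℝ → ℝ, IsRepMinus α ∧ ∀ t ≤ (0:ℝ),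
    φ (α t) y ∈ F.H (φ t x) ∩ Metric.closedBall (φ t x) ε}

/-- A stable point: each `H_δ(x)` is contained in `T^s_ε(x)` for suitable `δ`. -/
def StablePt [MetricSpace X] {τ : ℝ} (φ : Flow ℝ X) (F : SecField φ τ) (x : X) : Prop :=
  ∀ ε > (0:ℝ), ∃ δ > (0:ℝ), F.H x ∩ Metric.closedBall x δ ⊆ Tstab φ F ε x

/-- A stable point for the reversed flow. -/
def StablePtNeg [MetricSpace X] {τ : ℝ} (φ : Flow ℝ X) (F : SecField φ τ) (x : X) : Prop :=
  ∀ ε > (0:ℝ), ∃ δ > (0:ℝ), F.H x ∩ Metric.closedBall x δ ⊆ Tunstab φ F ε x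

/-- A continuum of reparametrizations `α ∈ 𝓗(A)`: to each point of `A` it assigns a
continuous function of time, continuously in the point, with the base point getting the
identity. -/
structure ContRep [MetricSpace X] (A : Set X) where
  α : X → ℝ → ℝ
  base : X
  base_mem : base ∈ A
  base_id : ∀ t : ℝ, α base t = t
  cont : ContinuousOn (fun p : X × ℝ => α p.1 p.2) (A ×ˢ (Set.univ : Set ℝ))

/-- `𝒳^t_α(A)`, the image of the continuum `A` at time `t` under the individual
reparametrizations. -/
def repImage [MetricSpace X] (φ : Flow ℝ X) {A : Set X} (β : ContRep A) (t : ℝ) : Set X :=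
  (fun y => φ (β.α y t) y) '' A

/-- Continuum-wise expansiveness of a flow. -/
def CwExpansive [MetricSpace X] (φ : Flow ℝ X) : Prop :=
  ∀ ε > (0:ℝ), ∃ δ > (0:ℝ), ∀ A : Set X, IsCompact A → IsConnected A → ∀ β : ContRep A,
    (∀ t : ℝ, Metric.diam (repImage φ β t) < δ) →
    ∀ y ∈ A, ∃ s : ℝ, |s| < ε ∧ y = φ s β.base

/-- The family `𝒯^s_ε` of sectionally geometric ε-stable continua. -/
def memTsFam [MetricSpace X] {τ : ℝ} (φ : Flow ℝ X) (F : SecField φ τ) (ε : ℝ)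
    (A : Set X) : Prop :=
  IsCompact A ∧ IsConnected A ∧ ∃ β : ContRep A, ∀ t ≥ (0:ℝ),
    repImage φ β t ⊆ F.H (φ t β.base) ∩ Metric.closedBall (φ t β.base) ε

/-- The family `𝒯^u_ε` of sectionally geometric ε-unstable continua. -/
def memTuFam [MetricSpace X] {τ : ℝ} (φ : Flow ℝ X) (F : SecField φ τ) (ε : ℝ)
    (A : Set X) : Prop :=
  IsCompact A ∧ IsConnected A ∧ ∃ β : ContRep A, ∀ t ≤ (0:ℝ),
    repImage φ β t ⊆ F.H (φ t β.base) ∩ Metric.closedBall (φ t β.base) ε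

/-- A recurrent point: `x ∈ ω(x)`. -/
def RecurrentPt [MetricSpace X] (φ : Flow ℝ X) (x : X) : Prop :=
  ∃ u : ℕ → ℝ, Filter.Tendsto u Filter.atTop Filter.atTop ∧
    Filter.Tendsto (fun n => φ (u n) x) Filter.atTop (nhds x)

/-- A periodic point. -/
def PeriodicPt [MetricSpace X] (φ : Flow ℝ X) (x : X) : Prop :=
  ∃ T > (0:ℝ), φ T x = x

/-- `y` belongs to the α-limit set of `x`. -/
def AlphaLimitPt [MetricSpace X] (φ : Flow ℝ X) (x y : X) : Prop :=
  ∃ u : ℕ → ℝ, Filter.Tendsto u Filter.atTop Filter.atBot ∧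
    Filter.Tendsto (fun n => φ (u n) x) Filter.atTop (nhds y)

/-- Bowen–Walters expansiveness of a flow. -/
def BWExpansive [MetricSpace X] (φ : Flow ℝ X) : Prop :=
  ∀ ε > (0:ℝ), ∃ δ > (0:ℝ), ∀ x y : X, ∀ α : ℝ → ℝ, IsRep α →
    (∀ t : ℝ, dist (φ (α t) y) (φ t x) ≤ δ) → ∃ s : ℝ, |s| < ε ∧ y = φ s x

section Aux
variable [MetricSpace X]

lemma flow_tendsto_aux (φ : Flow ℝ X) {u : ℕ → ℝ} {z : ℕ → X} {u0 : ℝ} {z0 : X}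
    (hu : Tendsto u atTop (𝓝 u0)) (hz : Tendsto z atTop (𝓝 z0)) :
    Tendsto (fun n => φ (u n) (z n)) atTop (𝓝 (φ u0 z0)) :=
  (φ.cont'.tendsto (u0, z0)).comp (hu.prodMk_nhds hz)

lemma memH_limit {τ : ℝ} (φ : Flow ℝ X) (F : SecField φ τ)
    (hcont : SecFieldContinuous φ F) {p z : ℕ → X} {p0 z0 : X}
    (hp : Tendsto p atTop (𝓝 p0)) (hz : Tendsto z atTop (𝓝 z0))
    (hmem : ∀ n, z n ∈ F.H (p n)) : z0 ∈ F.H p0 := by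
  have hne : ∀ x : X, (F.H x).Nonempty := fun x => ⟨x, F.mem_self x⟩
  have hHd : Tendsto (fun n => hausdorffDist (F.H (p n)) (F.H p0)) atTop (𝓝 0) :=
    (hcont p0).comp hp
  have hle : ∀ n, infDist (z n) (F.H p0) ≤ hausdorffDist (F.H (p n)) (F.H p0) := fun n =>
    infDist_le_hausdorffDist_of_mem (hmem n)
      (hausdorffEdist_ne_top_of_nonempty_of_bounded (hne _) (hne _)
        (F.compactH _).isBounded (F.compactH _).isBounded)
  have h0 : Tendsto (fun n => infDist (z n) (F.H p0)) atTop (𝓝 0) :=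
    squeeze_zero (fun n => infDist_nonneg) hle hHd
  have h1 : Tendsto (fun n => infDist (z n) (F.H p0)) atTop (𝓝 (infDist z0 (F.H p0))) :=
    ((continuous_infDist_pt (F.H p0)).tendsto z0).comp hz
  exact ((F.compactH p0).isClosed.mem_iff_infDist_zero (hne p0)).2 (tendsto_nhds_unique h1 h0)

lemma no_small_period {τ : ℝ} (φ : Flow ℝ X) (F : SecField φ τ)
    {z : X} {t : ℝ} (ht : |t| ≤ 2 * τ) (hz : φ t z = z) : t = 0 := by
  have hττ : 0 ≤ τ := by
    have := abs_nonneg t; linarith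
  have h2 : |t / 2| ≤ τ := by
    rw [abs_div, abs_two]; linarith [abs_nonneg t]
  have h2' := abs_le.mp h2
  have he : φ (t / 2) z = φ (-(t / 2)) z := by
    have h3 : φ (-(t / 2)) (φ t z) = φ (-(t / 2) + t) z := (φ.map_add _ _ _).symm
    rw [hz] at h3
    rw [h3]; congr 1; ring
  have hmem1 : ((t / 2, z) : ℝ × X) ∈ Set.Icc (-τ) τ ×ˢ F.H z :=
    ⟨⟨h2'.1, h2'.2⟩, F.mem_self z⟩
  have hmem2 : ((-(t / 2), z) : ℝ × X) ∈ Set.Icc (-τ) τ ×ˢ F.H z :=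
    ⟨⟨by linarith [h2'.2], by linarith [h2'.1]⟩, F.mem_self z⟩
  have heq := F.inj z hmem1 hmem2 he
  have := congrArg Prod.fst heq
  simp only at this
  linarith
end Aux

section Aux2
variable [MetricSpace X] [CompactSpace X]

lemma claimD (φ : Flow ℝ X) {η : ℝ} (hη : 0 < η) :
    ∃ δ > 0, ∀ u : ℝ, |u| ≤ δ → ∀ z : X, dist (φ u z) z ≤ η := by
  by_contra hcon
  push_neg at hcon
  choose u hu z hz using fun k : ℕ => hcon (1 / (k + 1)) (by positivity)
  have hu0 : Tendsto u atTop (𝓝 0) := by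
    apply squeeze_zero_norm (fun k => hu k)
    exact tendsto_one_div_add_atTop_nhds_zero_nat
  obtain ⟨z0, -, Ψ, hΨ, hz0⟩ := isCompact_univ.tendsto_subseq (x := z) (fun k => mem_univ _)
  have h1 : Tendsto (fun k => dist (φ (u (Ψ k)) (z (Ψ k))) (z (Ψ k))) atTop
      (𝓝 (dist (φ 0 z0) z0)) :=
    (Tendsto.dist (flow_tendsto_aux φ (hu0.comp hΨ.tendsto_atTop) hz0) hz0)
  simp only [φ.map_zero, id_eq, dist_self] at h1
  have : η ≤ 0 := ge_of_tendsto h1 (Eventually.of_forall (fun k => (hz (Ψ k)).le))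
  linarith

lemma claimC {τ : ℝ} (φ : Flow ℝ X) (hτ : 0 < τ)
    (F : SecField φ τ) (hcont : SecFieldContinuous φ F) {ε : ℝ} (hε : 0 < ε)
    (hεm : ε ≤ min (2 * τ) F.τ') :
    ∃ η > 0, ∀ p p' : X, ∀ q ∈ F.H p, ∀ Δ : ℝ, ε ≤ |Δ| → |Δ| ≤ min (2 * τ) F.τ' →
      φ Δ q ∈ F.H p' → η < dist p p' := by
  by_contra hcon
  push_neg at hcon
  choose p p' q hq Δ h1 h2 h3 h4 using fun k : ℕ => hcon (1 / (k + 1)) (by positivity)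
  obtain ⟨p0, -, ψ1, hψ1, hp1⟩ := isCompact_univ.tendsto_subseq (x := p) (fun k => mem_univ _)
  obtain ⟨q0, -, ψ2, hψ2, hq2⟩ :=
    isCompact_univ.tendsto_subseq (x := q ∘ ψ1) (fun k => mem_univ _)
  have hΔmem : ∀ k, (Δ ∘ ψ1 ∘ ψ2) k ∈ Icc (-(min (2 * τ) F.τ')) (min (2 * τ) F.τ') :=
    fun k => abs_le.mp (h2 _)
  obtain ⟨Δ0, hΔ0mem, ψ3, hψ3, hΔ3⟩ := isCompact_Icc.tendsto_subseq hΔmem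
  set Ψ : ℕ → ℕ := ψ1 ∘ ψ2 ∘ ψ3 with hΨdef
  have hΨ : StrictMono Ψ := hψ1.comp (hψ2.comp hψ3)
  have hpΨ : Tendsto (fun k => p (Ψ k)) atTop (𝓝 p0) :=
    hp1.comp (hψ2.comp hψ3).tendsto_atTop
  have hqΨ : Tendsto (fun k => q (Ψ k)) atTop (𝓝 q0) := hq2.comp hψ3.tendsto_atTop
  have hΔΨ : Tendsto (fun k => Δ (Ψ k)) atTop (𝓝 Δ0) := hΔ3
  have hp'Ψ : Tendsto (fun k => p' (Ψ k)) atTop (𝓝 p0) := by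
    rw [tendsto_iff_dist_tendsto_zero]
    apply squeeze_zero (fun k => dist_nonneg)
      (g := fun k => 1 / ((Ψ k : ℝ) + 1) + dist (p (Ψ k)) p0)
    · intro k
      calc dist (p' (Ψ k)) p0 ≤ dist (p' (Ψ k)) (p (Ψ k)) + dist (p (Ψ k)) p0 :=
            dist_triangle _ _ _
        _ ≤ 1 / ((Ψ k : ℝ) + 1) + dist (p (Ψ k)) p0 := by
            rw [dist_comm]; exact add_le_add_left (h4 (Ψ k)) _
    · have : Tendsto (fun k => 1 / ((Ψ k : ℝ) + 1)) atTop (𝓝 0) :=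
        tendsto_one_div_add_atTop_nhds_zero_nat.comp hΨ.tendsto_atTop
      simpa using this.add (tendsto_iff_dist_tendsto_zero.mp hpΨ)
  have hq0 : q0 ∈ F.H p0 := memH_limit φ F hcont hpΨ hqΨ (fun k => hq (Ψ k))
  have hq0' : φ Δ0 q0 ∈ F.H p0 :=
    memH_limit φ F hcont hp'Ψ (flow_tendsto_aux φ hΔΨ hqΨ) (fun k => h3 (Ψ k))
  have habs : |Δ0| ≤ min (2 * τ) F.τ' := abs_le.mpr hΔ0mem
  have hfix : φ Δ0 q0 = q0 := by
    have hmem : φ Δ0 q0 ∈ F.H p0 ∩ flowSeg φ (-F.τ') F.τ' {q0} := by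
      refine ⟨hq0', Δ0, ⟨?_, ?_⟩, q0, rfl, rfl⟩
      · have := (abs_le.mp habs).1
        have := min_le_right (2 * τ) F.τ'
        linarith
      · exact le_trans (le_abs_self _) (le_trans habs (min_le_right _ _))
    rw [F.unique_hit p0 q0 hq0] at hmem
    exact hmem
  have hΔ00 : Δ0 = 0 :=
    no_small_period φ F (le_trans habs (min_le_left _ _)) hfix
  have hεΔ : ε ≤ |Δ0| := by
    have : Tendsto (fun k => |Δ (Ψ k)|) atTop (𝓝 |Δ0|) := hΔΨ.abs
    exact ge_of_tendsto this (Eventually.of_forall (fun k => h1 (Ψ k)))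
  rw [hΔ00] at hεΔ
  simp at hεΔ
  linarith
end Aux2


section Main
variable [MetricSpace X] [CompactSpace X]

lemma keyE {τ : ℝ} (φ : Flow ℝ X) (hτ : 0 < τ) (F : SecField φ τ)
    (hcont : SecFieldContinuous φ F) {I : Set ℝ} (hI : I.OrdConnected)
    {h : ℕ → ℝ → ℝ} (hhc : ∀ n, ContinuousOn (h n) I)
    {xs ys : ℕ → X}
    (hsec : ∀ n : ℕ, ∀ t ∈ I, φ (h n t) (ys n) ∈ F.H (φ t (xs n)))
    {ε : ℝ} (hε : 0 < ε) (hεm : ε ≤ min (2 * τ) F.τ') :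
    ∃ δ > 0, ∀ n, ∀ t ∈ I, ∀ s ∈ I, |s - t| ≤ δ → |h n s - h n t| < ε := by
  obtain ⟨η, hη, hC⟩ := claimC φ hτ F hcont hε hεm
  obtain ⟨δ, hδ, hD⟩ := claimD φ hη
  refine ⟨δ, hδ, fun n t ht s hs hst => ?_⟩
  by_contra hge
  push_neg at hge
  have hsub : uIcc t s ⊆ I := hI.uIcc_subset ht hs
  have hcf : ContinuousOn (fun u => |h n u - h n t|) (uIcc t s) :=
    (((hhc n).mono hsub).sub continuousOn_const).abs
  have hmem : ε ∈ uIcc (|h n t - h n t|) (|h n s - h n t|) := by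
    rw [sub_self, abs_zero, Set.uIcc_of_le (abs_nonneg _)]
    exact ⟨hε.le, hge⟩
  obtain ⟨u, huI, hu⟩ := intermediate_value_uIcc hcf hmem
  simp only at hu
  have hut : |u - t| ≤ |s - t| := by
    have hA1 : s - t ≤ |s - t| := le_abs_self _
    have hA2 : -|s - t| ≤ s - t := neg_abs_le _
    rcases Set.mem_uIcc.mp huI with ⟨h1, h2⟩ | ⟨h1, h2⟩ <;>
      exact abs_le.mpr ⟨by linarith, by linarith⟩
  have hq : φ (h n t) (ys n) ∈ F.H (φ t (xs n)) := hsec n t ht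
  have hq' : φ (h n u - h n t) (φ (h n t) (ys n)) ∈ F.H (φ u (xs n)) := by
    have : φ (h n u - h n t) (φ (h n t) (ys n)) = φ (h n u) (ys n) := by
      rw [← φ.map_add]; congr 1; ring
    rw [this]
    exact hsec n u (hsub huI)
  have hd : dist (φ t (xs n)) (φ u (xs n)) ≤ η := by
    have heq : φ u (xs n) = φ (u - t) (φ t (xs n)) := by
      rw [← φ.map_add]; congr 1; ring
    rw [heq, dist_comm]
    exact hD (u - t) (le_trans hut (le_trans hst le_rfl)) _
  exact absurd hd (not_le.mpr (hC _ _ _ hq _ (le_of_eq hu.symm)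
    (hu ▸ hεm) hq'))

lemma chainBound {I : Set ℝ} (hI : I.OrdConnected) (h0I : (0:ℝ) ∈ I) {h : ℕ → ℝ → ℝ}
    (hh0 : ∀ n, h n 0 = 0) {δ1 m : ℝ} (hδ1 : 0 < δ1) (hm : 0 < m)
    (hE : ∀ n, ∀ t ∈ I, ∀ s ∈ I, |s - t| ≤ δ1 → |h n s - h n t| < m) :
    ∀ n, ∀ t ∈ I, |h n t| ≤ (|t| / δ1 + 2) * m := by
  intro n t ht
  set k : ℕ := ⌈|t| / δ1⌉₊ + 1 with hk
  have hk0 : (0:ℝ) < (k:ℝ) := by positivity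
  have hkge : |t| / δ1 ≤ (k:ℝ) := le_trans (Nat.le_ceil _) (by exact_mod_cast Nat.le_succ _)
  have htk : |t| ≤ δ1 * k := by rw [div_le_iff₀ hδ1] at hkge; linarith
  have hmemI : ∀ j : ℕ, j ≤ k → (j:ℝ) * t / k ∈ I := by
    intro j hj
    have hjk : (j:ℝ) ≤ (k:ℝ) := by exact_mod_cast hj
    have hj0 : (0:ℝ) ≤ (j:ℝ) := Nat.cast_nonneg j
    rcases le_total 0 t with h0t | h0t
    · refine hI.out h0I ht ⟨by positivity, ?_⟩
      rw [div_le_iff₀ hk0]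
      nlinarith
    · refine hI.out ht h0I ⟨?_, ?_⟩
      · rw [le_div_iff₀ hk0]
        nlinarith
      · rw [div_nonpos_iff]
        right
        exact ⟨by nlinarith, hk0.le⟩
  have hgap : ∀ i : ℕ, |((i+1:ℕ):ℝ) * t / k - (i:ℝ) * t / k| ≤ δ1 := by
    intro i
    have heq : ((i+1:ℕ):ℝ) * t / k - (i:ℝ) * t / k = t / k := by push_cast; ring
    rw [heq, abs_div, abs_of_pos hk0, div_le_iff₀ hk0]
    nlinarith
  have step : ∀ j : ℕ, j ≤ k → |h n ((j:ℝ) * t / k)| ≤ j * m := by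
    intro j
    induction j with
    | zero => intro _; simp [hh0 n]
    | succ i ih =>
      intro hj
      have hik : i ≤ k := le_trans (Nat.le_succ i) hj
      have hstep : |h n (((i+1:ℕ):ℝ) * t / k) - h n ((i:ℝ) * t / k)| < m :=
        hE n _ (hmemI i hik) _ (hmemI (i+1) hj) (hgap i)
      have hih := ih hik
      calc |h n (((i+1:ℕ):ℝ) * t / k)|
          = |h n ((i:ℝ) * t / k) + (h n (((i+1:ℕ):ℝ) * t / k) - h n ((i:ℝ) * t / k))| := by
            congr 1; ring
        _ ≤ |h n ((i:ℝ) * t / k)| + |h n (((i+1:ℕ):ℝ) * t / k) - h n ((i:ℝ) * t / k)| :=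
            abs_add_le _ _
        _ ≤ i * m + m := add_le_add hih hstep.le
        _ = ((i+1:ℕ):ℝ) * m := by push_cast; ring
  have hfin := step k le_rfl
  have hkt : (k:ℝ) * t / k = t := by field_simp
  rw [hkt] at hfin
  have hkb : (k:ℝ) ≤ |t| / δ1 + 2 := by
    have h2 := Nat.ceil_lt_add_one (show (0:ℝ) ≤ |t| / δ1 by positivity)
    have : (k:ℝ) = (⌈|t| / δ1⌉₊ : ℝ) + 1 := by rw [hk]; push_cast; ring
    linarith
  calc |h n t| ≤ k * m := hfin
    _ ≤ (|t| / δ1 + 2) * m := by nlinarith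


end Main

/-- convergence of reparametrizations along a field of sections. -/
theorem stmt8 [MetricSpace X] [CompactSpace X] (φ : Flow ℝ X) (hnofix : NoFixedPoints φ)
    (τ : ℝ) (hτ : 0 < τ) (F : SecField φ τ) (hcont : SecFieldContinuous φ F)
    (I : Set ℝ) (hI : I.OrdConnected) (h0I : (0:ℝ) ∈ I)
    (h : ℕ → ℝ → ℝ) (hhc : ∀ n, ContinuousOn (h n) I) (hh0 : ∀ n, h n 0 = 0)
    (x y : X) (xs ys : ℕ → X)
    (hxs : Filter.Tendsto xs Filter.atTop (nhds x))
    (hys : Filter.Tendsto ys Filter.atTop (nhds y))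
    (hsec : ∀ n : ℕ, ∀ t ∈ I, φ (h n t) (ys n) ∈ F.H (φ t (xs n))) :
    ∃ (ψ : ℕ → ℕ) (g : ℝ → ℝ), StrictMono ψ ∧ ContinuousOn g I ∧
      TendstoLocallyUniformlyOn (fun n => h (ψ n)) g Filter.atTop I ∧
      ∀ t ∈ I, φ (g t) y ∈ F.H (φ t x) := by
  classical
  set m := min (2 * τ) F.τ' with hm
  have hm0 : 0 < m := lt_min (by linarith) F.τ'_pos
  have hkeyE : ∀ ε : ℝ, 0 < ε → ε ≤ m → ∃ δ > 0, ∀ n, ∀ t ∈ I, ∀ s ∈ I,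
      |s - t| ≤ δ → |h n s - h n t| < ε :=
    fun ε hε hεm => keyE φ hτ F hcont hI hhc hsec hε hεm
  obtain ⟨δ1, hδ1, hE1⟩ := hkeyE m hm0 le_rfl
  have bound : ∀ n, ∀ t ∈ I, |h n t| ≤ (|t| / δ1 + 2) * m :=
    chainBound hI h0I hh0 hδ1 hm0 hE1
  let S := {q : ℚ // (q : ℝ) ∈ I}
  let B : S → ℝ := fun q => (|(q.1 : ℝ)| / δ1 + 2) * m
  let Y := ∀ q : S, (Icc (-(B q)) (B q) : Set ℝ)
  let u : ℕ → Y := fun n q => ⟨h n q.1, by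
    have h2 := abs_le.mp (bound n q.1 q.2)
    exact ⟨h2.1, h2.2⟩⟩
  obtain ⟨a, ψ, hψ, hconv⟩ := CompactSpace.tendsto_subseq u
  have hqconv : ∀ q : S, Tendsto (fun n => h (ψ n) q.1) atTop (𝓝 (a q).1) := by
    intro q
    have h1 : Tendsto (fun n => u (ψ n) q) atTop (𝓝 (a q)) := tendsto_pi_nhds.mp hconv q
    exact (continuous_subtype_val.tendsto _).comp h1
  have hrat : ∀ t ∈ I, ∀ d : ℝ, 0 < d → ∃ q : S, |(q.1 : ℝ) - t| ≤ d := by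
    intro t ht d hd
    rcases lt_trichotomy t 0 with h0 | h0 | h0
    · obtain ⟨q, hq1, hq2⟩ := exists_rat_btwn (show t < min (t + d) 0 from lt_min (by linarith) h0)
      have hq2' := lt_min_iff.mp hq2
      refine ⟨⟨q, hI.out ht h0I ⟨hq1.le, hq2'.2.le⟩⟩, ?_⟩
      have := hq2'.1
      exact abs_le.mpr ⟨by linarith, by linarith⟩
    · refine ⟨⟨0, by rw [Rat.cast_zero]; exact h0I⟩, ?_⟩
      simp [h0, hd.le]
    · obtain ⟨q, hq1, hq2⟩ := exists_rat_btwn (show max (t - d) 0 < t from max_lt (by linarith) h0)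
      have hq1' := max_lt_iff.mp hq1
      refine ⟨⟨q, hI.out h0I ht ⟨hq1'.2.le, hq2.le⟩⟩, ?_⟩
      have := hq1'.1
      exact abs_le.mpr ⟨by linarith, by linarith⟩
  have cauchy : ∀ t ∈ I, CauchySeq (fun n => h (ψ n) t) := by
    intro t ht
    rw [Metric.cauchySeq_iff]
    intro ε hε
    have hε40 : 0 < min (ε / 4) m := lt_min (by linarith) hm0
    obtain ⟨δ, hδ, hEδ⟩ := hkeyE _ hε40 (min_le_right _ _)
    obtain ⟨q, hq⟩ := hrat t ht δ hδ
    obtain ⟨N, hN⟩ := Metric.cauchySeq_iff.mp (hqconv q).cauchySeq _ hε40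
    refine ⟨N, fun i hi j hj => ?_⟩
    have hqt : |t - (q.1 : ℝ)| ≤ δ := by rw [abs_sub_comm]; exact hq
    have h1 : |h (ψ i) t - h (ψ i) q.1| < min (ε / 4) m := hEδ (ψ i) q.1 q.2 t ht hqt
    have h2 : |h (ψ j) t - h (ψ j) q.1| < min (ε / 4) m := hEδ (ψ j) q.1 q.2 t ht hqt
    have h3 := hN i hi j hj
    rw [Real.dist_eq] at h3 ⊢
    have hq4 : min (ε / 4) m ≤ ε / 4 := min_le_left _ _
    have tri : |h (ψ i) t - h (ψ j) t| ≤ |h (ψ i) t - h (ψ i) q.1| +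
        |h (ψ i) q.1 - h (ψ j) q.1| + |h (ψ j) q.1 - h (ψ j) t| := by
      have e : h (ψ i) t - h (ψ j) t = (h (ψ i) t - h (ψ i) q.1) +
          (h (ψ i) q.1 - h (ψ j) q.1) + (h (ψ j) q.1 - h (ψ j) t) := by ring
      rw [e]
      exact abs_add_three _ _ _
    rw [abs_sub_comm (h (ψ j) q.1)] at tri
    linarith
  set g : ℝ → ℝ := fun t => limUnder atTop (fun n => h (ψ n) t) with hg
  have htend : ∀ t ∈ I, Tendsto (fun n => h (ψ n) t) atTop (𝓝 (g t)) :=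
    fun t ht => (cauchy t ht).tendsto_limUnder
  have gmod : ∀ ε : ℝ, 0 < ε → ε ≤ m → ∃ δ > 0, ∀ t ∈ I, ∀ s ∈ I, |s - t| ≤ δ →
      |g s - g t| ≤ ε := by
    intro ε hε hεm
    obtain ⟨δ, hδ, hEδ⟩ := hkeyE ε hε hεm
    refine ⟨δ, hδ, fun t ht s hs hst => ?_⟩
    have h1 : Tendsto (fun n => |h (ψ n) s - h (ψ n) t|) atTop (𝓝 |g s - g t|) :=
      ((htend s hs).sub (htend t ht)).abs
    exact le_of_tendsto h1 (Eventually.of_forall fun n => (hEδ (ψ n) t ht s hs hst).le)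
  have gcont : ContinuousOn g I := by
    intro t ht
    rw [Metric.continuousWithinAt_iff]
    intro ε hε
    have hε20 : 0 < min (ε / 2) m := lt_min (by linarith) hm0
    obtain ⟨δ, hδ, hmod⟩ := gmod _ hε20 (min_le_right _ _)
    refine ⟨δ, hδ, fun {s} hs hst => ?_⟩
    rw [Real.dist_eq] at hst ⊢
    have := hmod t ht s hs hst.le
    have h2 : min (ε / 2) m ≤ ε / 2 := min_le_left _ _
    linarith
  have tlu : TendstoLocallyUniformlyOn (fun n => h (ψ n)) g atTop I := by
    rw [Metric.tendstoLocallyUniformlyOn_iff]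
    intro ε hε t ht
    have hε40 : 0 < min (ε / 4) m := lt_min (by linarith) hm0
    obtain ⟨δ, hδ, hEδ⟩ := hkeyE _ hε40 (min_le_right _ _)
    obtain ⟨δ2, hδ2, hmod⟩ := gmod _ hε40 (min_le_right _ _)
    refine ⟨I ∩ Metric.ball t (min δ δ2),
      inter_mem_nhdsWithin I (Metric.ball_mem_nhds t (lt_min hδ hδ2)), ?_⟩
    have hev : ∀ᶠ n in atTop, dist (h (ψ n) t) (g t) < min (ε / 4) m :=
      (Metric.tendsto_nhds.mp (htend t ht)) _ hε40
    filter_upwards [hev] with n hn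
    rintro z ⟨hzI, hzb⟩
    rw [Metric.mem_ball, Real.dist_eq] at hzb
    have hzδ : |z - t| ≤ δ := le_trans hzb.le (min_le_left _ _)
    have hzδ2 : |z - t| ≤ δ2 := le_trans hzb.le (min_le_right _ _)
    have e1 : |g z - g t| ≤ min (ε / 4) m := hmod t ht z hzI hzδ2
    have e2 : |h (ψ n) z - h (ψ n) t| < min (ε / 4) m := hEδ (ψ n) t ht z hzI hzδ
    rw [Real.dist_eq] at hn ⊢
    have hq4 : min (ε / 4) m ≤ ε / 4 := min_le_left _ _
    have tri : |g z - h (ψ n) z| ≤ |g z - g t| + |g t - h (ψ n) t| +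
        |h (ψ n) t - h (ψ n) z| := by
      have e : g z - h (ψ n) z = (g z - g t) + (g t - h (ψ n) t) +
          (h (ψ n) t - h (ψ n) z) := by ring
      rw [e]
      exact abs_add_three _ _ _
    have hn' : |g t - h (ψ n) t| < min (ε / 4) m := by rw [abs_sub_comm]; exact hn
    have e2' : |h (ψ n) t - h (ψ n) z| < min (ε / 4) m := by rw [abs_sub_comm]; exact e2
    linarith
  have gmem : ∀ t ∈ I, φ (g t) y ∈ F.H (φ t x) := by
    intro t ht
    have hpx : Tendsto (fun n => φ t (xs (ψ n))) atTop (𝓝 (φ t x)) :=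
      flow_tendsto_aux φ tendsto_const_nhds (hxs.comp hψ.tendsto_atTop)
    have hzy : Tendsto (fun n => φ (h (ψ n) t) (ys (ψ n))) atTop (𝓝 (φ (g t) y)) :=
      flow_tendsto_aux φ (htend t ht) (hys.comp hψ.tendsto_atTop)
    exact memH_limit φ F hcont hpx hzy (fun n => hsec (ψ n) t ht)
  exact ⟨ψ, g, hψ, gcont, tlu, gmem⟩
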